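/- Let α ∈ (1,2) and ω(ξ) = −ξ|ξ|^α. There exists a constant C such that the following holds: let U₁, U₂, U₃ ⊆ ℝ be measurable sets and d > 0 be such that (α+1) · ||ξ₁|^α − |ξ₂|^α| ≥ d whenever ξ₁ ∈ U₁, ξ₂ ∈ U₂ and ξ₁ + ξ₂ ∈ U₃. Then for every measurable function g : ℝ² → ℂ with ∫_{ℝ²} |g|² < ∞ and g(ξ,μ) = 0 whenever ξ ∉ U₃, one has ∫_{U₁×U₂} |g(ξ₁+ξ₂, ω(ξ₁)+ω(ξ₂))|² dξ₁ dξ₂ ≤ C d^{-1} ∫_{ℝ²} |g(ξ,μ)|² dξ dμ. -/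

import Mathlib

open MeasureTheory Set
open scoped ENNReal

noncomputable section

/-- The dispersion relation `ω(ξ) = -ξ|ξ|^α`. -/
def omega (α ξ : ℝ) : ℝ := -ξ * |ξ| ^ α

namespace Statement14Aux

lemma hasDerivAt_omega {α : ℝ} (hα : 1 < α) (x : ℝ) :
    HasDerivAt (omega α) (-(α + 1) * |x| ^ α) x := by
  have hα0 : (0:ℝ) < α := lt_trans one_pos hα
  rcases lt_trichotomy x 0 with hx | hx | hx
  · -- x < 0
    have hu : HasDerivAt (fun y : ℝ => (-y) ^ α) (α * (-x) ^ (α - 1) * (-1)) x := by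
      exact (Real.hasDerivAt_rpow_const (x := -x) (p := α) (Or.inr hα.le)).comp x (hasDerivAt_neg x)
    have hG : HasDerivAt (fun y : ℝ => -y * (-y) ^ α)
        ((-1) * (-x) ^ α + (-x) * (α * (-x) ^ (α - 1) * (-1))) x :=
      (hasDerivAt_neg x).mul hu
    have heq : (fun y : ℝ => -y * (-y) ^ α) =ᶠ[nhds x] omega α := by
      filter_upwards [Iio_mem_nhds hx] with y hy
      simp only [mem_Iio] at hy
      simp only [omega, abs_of_neg hy]
    have := hG.congr_of_eventuallyEq heq.symm
    refine this.congr_deriv ?_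
    have hax : (0:ℝ) < -x := by linarith
    have h1 : (-x) * (-x) ^ (α - 1) = (-x) ^ α := by
      rw [mul_comm, ← Real.rpow_add_one (ne_of_gt hax)]
      norm_num
    rw [abs_of_neg hx]
    nlinarith [h1]
  · -- x = 0
    subst hx
    rw [hasDerivAt_iff_tendsto_slope]
    have hval : -(α + 1) * |(0:ℝ)| ^ α = 0 := by
      rw [abs_zero, Real.zero_rpow (ne_of_gt hα0)]; ring
    rw [hval]
    have htend : Filter.Tendsto (fun y : ℝ => -(|y| ^ α)) (nhds 0) (nhds 0) := by
      have h0 : ContinuousAt (fun z : ℝ => z ^ α) (|(0:ℝ)|) := by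
        rw [abs_zero]
        exact Real.continuousAt_rpow_const 0 α (Or.inr hα0.le)
      have : Filter.Tendsto (fun y : ℝ => |y| ^ α) (nhds 0) (nhds (|(0:ℝ)| ^ α)) :=
        (h0.comp continuous_abs.continuousAt)
      rw [abs_zero, Real.zero_rpow (ne_of_gt hα0)] at this
      simpa using this.neg
    apply Filter.Tendsto.congr' _ (htend.mono_left nhdsWithin_le_nhds)
    filter_upwards [self_mem_nhdsWithin] with y hy
    have hy0 : y ≠ 0 := hy
    simp only [slope, omega, sub_zero, vsub_eq_sub]
    field_simp
    ring_nf
    rw [mul_inv_cancel_right₀ hy0]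
  · -- 0 < x
    have hG : HasDerivAt (fun y : ℝ => -(y ^ (α + 1))) (-((α + 1) * x ^ (α + 1 - 1))) x :=
      (Real.hasDerivAt_rpow_const (x := x) (p := α + 1) (Or.inr (by linarith))).neg
    have heq : (fun y : ℝ => -(y ^ (α + 1))) =ᶠ[nhds x] omega α := by
      filter_upwards [Ioi_mem_nhds hx] with y hy
      have hy0 : (0:ℝ) < y := hy
      simp only [omega, abs_of_pos hy0]
      rw [Real.rpow_add_one (ne_of_gt hy0)]
      ring
    have := hG.congr_of_eventuallyEq heq.symm
    refine this.congr_deriv ?_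
    rw [abs_of_pos hx]
    ring_nf

def phi (α ξ t : ℝ) : ℝ := omega α (ξ - t) + omega α t

lemma phi_symm (α ξ t : ℝ) : phi α ξ (ξ - t) = phi α ξ t := by
  simp only [phi, sub_sub_cancel]; ring

lemma hasDerivAt_phi {α : ℝ} (hα : 1 < α) (ξ t : ℝ) :
    HasDerivAt (phi α ξ) ((α + 1) * (|ξ - t| ^ α - |t| ^ α)) t := by
  have h1 : HasDerivAt (fun s : ℝ => omega α (ξ - s))
      ((-(α + 1) * |ξ - t| ^ α) * (0 - 1)) t :=
    (hasDerivAt_omega hα (ξ - t)).comp t ((hasDerivAt_const t ξ).sub (hasDerivAt_id t))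
  have h2 := hasDerivAt_omega hα t
  have h3 := h1.add h2
  have h4 : (fun s : ℝ => omega α (ξ - s) + omega α s) = phi α ξ := rfl
  rw [← h4]
  refine h3.congr_deriv ?_
  ring

lemma abs_lt_abs_sub {ξ t : ℝ} (h : 2 * ξ * t < ξ ^ 2) : |t| < |ξ - t| := by
  rcases abs_cases t with ⟨h1, h1'⟩ | ⟨h1, h1'⟩ <;>
    rcases abs_cases (ξ - t) with ⟨h2, h2'⟩ | ⟨h2, h2'⟩ <;>
    rw [h1, h2] <;> nlinarith

lemma injOn_phi {α : ℝ} (hα : 1 < α) {ξ : ℝ} (hξ : ξ ≠ 0) :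
    InjOn (phi α ξ) (Iio (ξ / 2)) ∧ InjOn (phi α ξ) (Ioi (ξ / 2)) := by
  have hα0 : (0:ℝ) < α := lt_trans one_pos hα
  have hcont : ∀ s : Set ℝ, ContinuousOn (phi α ξ) s := fun s t _ =>
    (hasDerivAt_phi hα ξ t).continuousAt.continuousWithinAt
  have hderiv : ∀ t : ℝ, deriv (phi α ξ) t = (α + 1) * (|ξ - t| ^ α - |t| ^ α) := fun t =>
    (hasDerivAt_phi hα ξ t).deriv
  have hIio : InjOn (phi α ξ) (Iio (ξ / 2)) := by
    rcases hξ.lt_or_gt with hneg | hpos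
    · -- ξ < 0 : on Iio (ξ/2), 2ξt > ξ², so |ξ - t| < |t|, deriv < 0
      apply StrictAntiOn.injOn
      apply strictAntiOn_of_deriv_neg (convex_Iio _) (hcont _)
      intro t ht
      rw [interior_Iio, mem_Iio] at ht
      rw [hderiv]
      have habs : |ξ - t| < |t| := by
        have : |ξ - t| < |ξ - (ξ - t)| := abs_lt_abs_sub (by nlinarith)
        simpa using this
      have : |ξ - t| ^ α < |t| ^ α :=
        Real.rpow_lt_rpow (abs_nonneg _) habs hα0
      nlinarith
    · apply StrictMonoOn.injOn
      apply strictMonoOn_of_deriv_pos (convex_Iio _) (hcont _)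
      intro t ht
      rw [interior_Iio, mem_Iio] at ht
      rw [hderiv]
      have habs : |t| < |ξ - t| := abs_lt_abs_sub (by nlinarith)
      have : |t| ^ α < |ξ - t| ^ α :=
        Real.rpow_lt_rpow (abs_nonneg _) habs hα0
      nlinarith
  refine ⟨hIio, ?_⟩
  intro a ha b hb hab
  rw [mem_Ioi] at ha hb
  have h1 : phi α ξ (ξ - a) = phi α ξ (ξ - b) := by
    rw [phi_symm, phi_symm]; exact hab
  have h2 : ξ - a = ξ - b :=
    hIio (by rw [mem_Iio]; linarith) (by rw [mem_Iio]; linarith) h1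
  linarith

lemma lintegral_image_1d {s : Set ℝ} {f f' : ℝ → ℝ} (hs : MeasurableSet s)
    (hf' : ∀ x ∈ s, HasDerivWithinAt f (f' x) s x) (hf : InjOn f s) (g : ℝ → ℝ≥0∞) :
    ∫⁻ x in f '' s, g x = ∫⁻ x in s, ENNReal.ofReal |f' x| * g (f x) := by
  simpa only [ContinuousLinearMap.det_toSpanSingleton] using
    lintegral_image_eq_lintegral_abs_det_fderiv_mul volume hs
      (fun x hx => (hf' x hx).hasFDerivWithinAt) hf g

lemma inner_bound {α : ℝ} (hα : 1 < α) {d : ℝ} (hd : 0 < d) (ξ : ℝ) {S : Set ℝ}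
    (hS : MeasurableSet S)
    (hsep : ∀ t ∈ S, d ≤ (α + 1) * |(|ξ - t| ^ α) - (|t| ^ α)|)
    (G : ℝ → ℝ≥0∞) :
    ∫⁻ t in S, G (phi α ξ t) ≤ ENNReal.ofReal (2 / d) * ∫⁻ μ, G μ := by
  have hα1 : (0:ℝ) < α + 1 := by linarith
  rcases eq_or_ne ξ 0 with rfl | hξ
  · -- S is empty
    have hempty : S = ∅ := by
      rw [eq_empty_iff_forall_notMem]
      intro t ht
      have := hsep t ht
      rw [zero_sub, abs_neg, sub_self, abs_zero, mul_zero] at this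
      linarith
    simp [hempty]
  · have hhalf : ξ / 2 ∉ S := by
      intro h
      have := hsep _ h
      have h2 : ξ - ξ / 2 = ξ / 2 := by ring
      rw [h2, sub_self, abs_zero, mul_zero] at this
      linarith
    obtain ⟨hinj1, hinj2⟩ := injOn_phi hα hξ
    have key : ∀ P : Set ℝ, MeasurableSet P → P ⊆ S → InjOn (phi α ξ) P →
        ∫⁻ t in P, G (phi α ξ t) ≤ ENNReal.ofReal (1 / d) * ∫⁻ μ, G μ := by
      intro P hP hPS hinj
      have step1 : ∫⁻ t in P, G (phi α ξ t) ≤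
          ∫⁻ t in P, ENNReal.ofReal (1 / d) *
            (ENNReal.ofReal |(α + 1) * (|ξ - t| ^ α - |t| ^ α)| * G (phi α ξ t)) := by
        apply setLIntegral_mono' hP
        intro t ht
        have hdt : d ≤ |(α + 1) * (|ξ - t| ^ α - |t| ^ α)| := by
          rw [abs_mul, abs_of_pos hα1]
          exact hsep t (hPS ht)
        rw [← mul_assoc, ← ENNReal.ofReal_mul (by positivity)]
        apply le_mul_of_one_le_left zero_le
        rw [ENNReal.one_le_ofReal]
        rw [one_div]
        calc (1:ℝ) = d⁻¹ * d := by field_simp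
        _ ≤ d⁻¹ * |(α + 1) * (|ξ - t| ^ α - |t| ^ α)| := by
            apply mul_le_mul_of_nonneg_left hdt (by positivity)
      have step2 : ∫⁻ t in P, ENNReal.ofReal (1 / d) *
            (ENNReal.ofReal |(α + 1) * (|ξ - t| ^ α - |t| ^ α)| * G (phi α ξ t)) =
          ENNReal.ofReal (1 / d) * ∫⁻ t in P,
            ENNReal.ofReal |(α + 1) * (|ξ - t| ^ α - |t| ^ α)| * G (phi α ξ t) :=
        lintegral_const_mul' _ _ ENNReal.ofReal_ne_top
      have step3 : ∫⁻ t in P,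
            ENNReal.ofReal |(α + 1) * (|ξ - t| ^ α - |t| ^ α)| * G (phi α ξ t) =
          ∫⁻ x in phi α ξ '' P, G x :=
        (lintegral_image_1d hP
          (fun t _ => (hasDerivAt_phi hα ξ t).hasDerivWithinAt) hinj G).symm
      calc ∫⁻ t in P, G (phi α ξ t) ≤ _ := step1
        _ = _ := step2
        _ = ENNReal.ofReal (1 / d) * ∫⁻ x in phi α ξ '' P, G x := by rw [step3]
        _ ≤ ENNReal.ofReal (1 / d) * ∫⁻ x, G x :=
            mul_le_mul_right (setLIntegral_le_lintegral _ _) _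
    have hSAB : S = (S ∩ Iio (ξ / 2)) ∪ (S ∩ Ioi (ξ / 2)) := by
      ext t
      constructor
      · intro ht
        rcases lt_trichotomy t (ξ / 2) with h | h | h
        · exact Or.inl ⟨ht, h⟩
        · exact absurd (h ▸ ht) hhalf
        · exact Or.inr ⟨ht, h⟩
      · rintro (⟨ht, _⟩ | ⟨ht, _⟩) <;> exact ht
    rw [hSAB, lintegral_union (hS.inter measurableSet_Ioi)
      (Disjoint.mono inter_subset_right inter_subset_right ((Iio_disjoint_Ici le_rfl).mono_right Ioi_subset_Ici_self))]
    have h1 := key _ (hS.inter measurableSet_Iio) inter_subset_left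
      (hinj1.mono inter_subset_right)
    have h2 := key _ (hS.inter measurableSet_Ioi) inter_subset_left
      (hinj2.mono inter_subset_right)
    calc _ ≤ (ENNReal.ofReal (1 / d) * ∫⁻ μ, G μ) + ENNReal.ofReal (1 / d) * ∫⁻ μ, G μ :=
          add_le_add h1 h2
      _ = ENNReal.ofReal (2 / d) * ∫⁻ μ, G μ := by
          rw [← add_mul, ← ENNReal.ofReal_add (by positivity) (by positivity)]
          congr 2
          field_simp
          ring

lemma continuous_omega {α : ℝ} (hα0 : 0 ≤ α) : Continuous (omega α) :=
  (continuous_id.neg).mul ((Real.continuous_rpow_const hα0).comp continuous_abs)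

end Statement14Aux

open Statement14Aux in
/-- Change-of-variables `L²` estimate on the curve `(ξ₁+ξ₂, ω(ξ₁)+ω(ξ₂))` under a
transversality (group velocity separation) assumption. -/
theorem statement14 (α : ℝ) (hα : α ∈ Set.Ioo (1 : ℝ) 2) :
    ∃ C : ℝ, 0 < C ∧
      ∀ (U₁ U₂ U₃ : Set ℝ), MeasurableSet U₁ → MeasurableSet U₂ → MeasurableSet U₃ →
      ∀ d : ℝ, 0 < d →
      (∀ ξ₁ ∈ U₁, ∀ ξ₂ ∈ U₂, ξ₁ + ξ₂ ∈ U₃ →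
        d ≤ (α + 1) * |(|ξ₁| ^ α) - (|ξ₂| ^ α)|) →
      ∀ g : ℝ × ℝ → ℂ, Measurable g →
        (∫⁻ q : ℝ × ℝ, (‖g q‖₊ : ℝ≥0∞) ^ 2) < ⊤ →
        (∀ ξ μ : ℝ, ξ ∉ U₃ → g (ξ, μ) = 0) →
        (∫⁻ p in U₁ ×ˢ U₂,
            (‖g (p.1 + p.2, omega α p.1 + omega α p.2)‖₊ : ℝ≥0∞) ^ 2) ≤
          ENNReal.ofReal (C / d) * ∫⁻ q : ℝ × ℝ, (‖g q‖₊ : ℝ≥0∞) ^ 2 := by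
  obtain ⟨hα1, -⟩ := hα
  refine ⟨2, two_pos, ?_⟩
  intro U₁ U₂ U₃ hU₁ hU₂ hU₃ d hd hsep g hg _ hsupp
  set F : ℝ × ℝ → ℝ≥0∞ := fun q => (‖g q‖₊ : ℝ≥0∞) ^ 2 with hF
  have hFmeas : Measurable F := (hg.nnnorm.coe_nnreal_ennreal).pow_const 2
  let E : ℝ × ℝ ≃ᵐ ℝ × ℝ :=
    { toFun := fun z => (z.1 - z.2, z.2)
      invFun := fun z => (z.1 + z.2, z.2)
      left_inv := fun z => by simp
      right_inv := fun z => by simp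
      measurable_toFun := (measurable_fst.sub measurable_snd).prodMk measurable_snd
      measurable_invFun := (measurable_fst.add measurable_snd).prodMk measurable_snd }
  have hmp : MeasurePreserving (⇑E) ((volume : Measure ℝ).prod volume)
      ((volume : Measure ℝ).prod volume) := by
    exact measurePreserving_sub_prod volume volume
  rw [Measure.volume_eq_prod]
  -- the inner integrand after the shear
  set H : ℝ × ℝ → ℝ≥0∞ := fun q => F (q.1, omega α (q.1 - q.2) + omega α q.2) with hHdef
  have hHmeas : Measurable H := by
    apply hFmeas.comp
    exact measurable_fst.prodMk
      ((((continuous_omega (by linarith)).measurable).comp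
          (measurable_fst.sub measurable_snd)).add
        (((continuous_omega (by linarith)).measurable).comp measurable_snd))
  have hV : MeasurableSet (E ⁻¹' (U₁ ×ˢ U₂)) := E.measurable (hU₁.prod hU₂)
  have cov : ∫⁻ p in U₁ ×ˢ U₂, F (p.1 + p.2, omega α p.1 + omega α p.2)
        ∂((volume : Measure ℝ).prod volume)
      = ∫⁻ q in E ⁻¹' (U₁ ×ˢ U₂), H q ∂((volume : Measure ℝ).prod volume) := by
    rw [← hmp.setLIntegral_comp_preimage_emb E.measurableEmbedding
      (fun p => F (p.1 + p.2, omega α p.1 + omega α p.2)) (U₁ ×ˢ U₂)]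
    refine lintegral_congr fun q => ?_
    have hEq : E q = (q.1 - q.2, q.2) := rfl
    rw [hEq]
    simp only [hHdef]
    congr 2
    ring
  rw [show (∫⁻ p in U₁ ×ˢ U₂,
        (‖g (p.1 + p.2, omega α p.1 + omega α p.2)‖₊ : ℝ≥0∞) ^ 2
        ∂((volume : Measure ℝ).prod volume))
      = ∫⁻ p in U₁ ×ˢ U₂, F (p.1 + p.2, omega α p.1 + omega α p.2)
        ∂((volume : Measure ℝ).prod volume) from rfl, cov,
    ← lintegral_indicator hV, lintegral_prod _ (hHmeas.indicator hV).aemeasurable]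
  have hbound : ∀ ξ : ℝ,
      (∫⁻ t, (E ⁻¹' (U₁ ×ˢ U₂)).indicator H (ξ, t))
        ≤ ENNReal.ofReal (2 / d) * ∫⁻ μ, F (ξ, μ) := by
    intro ξ
    set S : Set ℝ := (fun t => ξ - t) ⁻¹' U₁ ∩ U₂ with hSdef
    have hSmeas : MeasurableSet S :=
      ((measurable_const.sub measurable_id) hU₁).inter hU₂
    have hind : ∀ t : ℝ, (E ⁻¹' (U₁ ×ˢ U₂)).indicator H (ξ, t)
        = S.indicator (fun t => F (ξ, phi α ξ t)) t := by
      intro t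
      have hmem : (ξ, t) ∈ E ⁻¹' (U₁ ×ˢ U₂) ↔ t ∈ S := by
        simp only [mem_preimage, hSdef, mem_inter_iff, mem_prod]
        have hEq : E (ξ, t) = (ξ - t, t) := rfl
        rw [hEq]
      by_cases h : t ∈ S
      · rw [indicator_of_mem (hmem.mpr h), indicator_of_mem h]
        rfl
      · rw [indicator_of_notMem (fun hc => h (hmem.mp hc)), indicator_of_notMem h]
    simp_rw [hind]
    rw [lintegral_indicator hSmeas]
    by_cases hξ3 : ξ ∈ U₃
    · refine inner_bound hα1 hd ξ hSmeas ?_ _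
      intro t ht
      have := hsep (ξ - t) ht.1 t ht.2 (by rw [sub_add_cancel]; exact hξ3)
      exact this
    · have hzero : ∀ t ∈ S, (fun t => F (ξ, phi α ξ t)) t = 0 := by
        intro t _
        simp only [hF, hsupp ξ _ hξ3, nnnorm_zero, ENNReal.coe_zero]
        exact zero_pow (by norm_num)
      rw [setLIntegral_congr_fun hSmeas hzero]
      simp
  calc (∫⁻ ξ, ∫⁻ t, (E ⁻¹' (U₁ ×ˢ U₂)).indicator H (ξ, t))
      ≤ ∫⁻ ξ, ENNReal.ofReal (2 / d) * ∫⁻ μ, F (ξ, μ) := lintegral_mono hbound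
    _ = ENNReal.ofReal (2 / d) * ∫⁻ ξ, ∫⁻ μ, F (ξ, μ) :=
        lintegral_const_mul' _ _ ENNReal.ofReal_ne_top
    _ = ENNReal.ofReal (2 / d) * ∫⁻ q, F q ∂((volume : Measure ℝ).prod volume) := by
        rw [← lintegral_prod _ hFmeas.aemeasurable]
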